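/- The triple (T_•, ∗̄, δ̂) is a graded connected cocommutative Hopf algebra over ℤ: (T_•, ∗̄) is a graded associative unital algebra, δ̂ is a coassociative cocommutative counital coproduct, δ̂ is an algebra homomorphism from (T_•, ∗̄) to its tensor square equipped with the componentwise product (that is, δ̂(x ∗̄ y) = δ̂(x) · δ̂(y)), the counit (projection onto T_0 ≅ ℤ) is an algebra homomorphism, and, T_• being graded with degree-0 component ℤ, an antipode exists. -/

import Mathlib

set_option linter.unreachableTactic false
set_option linter.unusedTactic false
set_option maxHeartbeats 1000000


open Finset

/-- Candidate set compositions: lists of finite sets of positive naturals. -/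
abbrev SC : Type := List (Finset ℕ)

/-- The underlying (ground) set of a list of blocks. -/
def ground (L : SC) : Finset ℕ := L.foldr (· ∪ ·) ∅

/-- `L` is a set composition of `[n] = {1,…,n}`. -/
def IsSetComp (n : ℕ) (L : SC) : Prop :=
  (∀ B ∈ L, B.Nonempty) ∧ L.Pairwise Disjoint ∧ ground L = Finset.Icc 1 n

/-- The degree of a set composition (largest element of its ground set). -/
def maxG (L : SC) : ℕ := (ground L).sup id

/-- The 1-based rank of `x` inside the finite set `A` (the position of `x` in the
increasing enumeration of `A`, when `x ∈ A`); this is the order preserving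
relabelling `A → [|A|]`. -/
def rankIn (A : Finset ℕ) (x : ℕ) : ℕ := (A.filter (· ≤ x)).card

/-- `P|_A` : intersect the blocks with `A`, delete the empty intersections, and
relabel along the order preserving bijection `A → [|A|]`. -/
def restrictSC (A : Finset ℕ) (L : SC) : SC :=
  (L.map fun B => (B ∩ A).image (rankIn A)).filter fun B => decide B.Nonempty

/-- Shift all entries of all blocks by `p`. -/
def shiftSC (p : ℕ) (L : SC) : SC := L.map (Finset.image (· + p))

/-- The restricted product `∗̄` on set compositions:
`P ∗̄ Q = (P₁,…,P_k, p+Q₁,…,p+Q_l)` for `P ∈ Comp_p`. -/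
def barMul (P Q : SC) : SC := P ++ shiftSC (maxG P) Q

/-- The order-preserving relabelling map `S → T` (`is_{S,T}`), for finite sets
of equal cardinality. -/
def relabelFun (S T : Finset ℕ) (x : ℕ) : ℕ := (T.sort (· ≤ ·)).getD (rankIn S x - 1) 0

/-- Relabel a set composition of `S` along the order-preserving bijection `S → T`. -/
def relabelSC (S T : Finset ℕ) (L : SC) : SC := L.map (Finset.image (relabelFun S T))

variable (R : Type) [CommRing R]

/-- The free module with basis indexed by lists of blocks; the twisted descent
algebra `T_•` is its submodule spanned by the set compositions. -/
abbrev FM := SC →₀ R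

/-- `T_•` as a submodule: the span of the set compositions. -/
noncomputable def Tspan : Submodule R (FM R) :=
  Submodule.span R {f : FM R | ∃ n P, IsSetComp n P ∧ f = Finsupp.single P 1}

/-- The restricted product `∗̄` as a bilinear map. -/
noncomputable def barL : FM R →ₗ[R] FM R →ₗ[R] FM R :=
  Finsupp.lift _ R SC fun P => Finsupp.lift _ R SC fun Q => Finsupp.single (barMul P Q) 1

/-- The symmetrized product `∗̂` on basis elements:
`P ∗̂ Q = Σ is_{[p],A}(P) ∗ is_{[q],B}(Q)` over all `A ⊔ B = [p+q]`, `|A| = p`. -/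
noncomputable def hatB (P Q : SC) : FM R :=
  ∑ A ∈ (Finset.Icc 1 (maxG P + maxG Q)).powerset.filter (fun A => A.card = maxG P),
    Finsupp.single
      (relabelSC (Finset.Icc 1 (maxG P)) A P ++
        relabelSC (Finset.Icc 1 (maxG Q)) ((Finset.Icc 1 (maxG P + maxG Q)) \ A) Q) 1

/-- The symmetrized product `∗̂` as a bilinear map. -/
noncomputable def hatL : FM R →ₗ[R] FM R →ₗ[R] FM R :=
  Finsupp.lift _ R SC fun P => Finsupp.lift _ R SC fun Q => hatB R P Q

/-- `T_• ⊗ T_•`, realized as the free module on pairs of basis elements. -/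
abbrev FM2 := (SC × SC) →₀ R

/-- `T_• ⊗ T_• ⊗ T_•`, realized as the free module on triples of basis elements. -/
abbrev FM3 := (SC × SC × SC) →₀ R

/-- The restricted coproduct `δ̄ (P) = Σ_{p=0}^n P|_{[p]} ⊗ P|_{{p+1,…,n}}`. -/
noncomputable def dBarL : FM R →ₗ[R] FM2 R :=
  Finsupp.lift _ R SC fun P =>
    ∑ p ∈ Finset.range (maxG P + 1),
      Finsupp.single
        (restrictSC (Finset.Icc 1 p) P, restrictSC (Finset.Icc (p+1) (maxG P)) P) 1

/-- The cosymmetrized coproduct `δ̂ (P) = Σ_{A ⊔ B = [n]} P|_A ⊗ P|_B`. -/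
noncomputable def dHatL : FM R →ₗ[R] FM2 R :=
  Finsupp.lift _ R SC fun P =>
    ∑ A ∈ (Finset.Icc 1 (maxG P)).powerset,
      Finsupp.single (restrictSC A P, restrictSC ((Finset.Icc 1 (maxG P)) \ A) P) 1

/-- Apply a coproduct to the first tensor factor:  `d ⊗ id : T⊗T → T⊗T⊗T`. -/
noncomputable def applyFst (d : FM R →ₗ[R] FM2 R) : FM2 R →ₗ[R] FM3 R :=
  Finsupp.lift _ R (SC × SC) fun PQ =>
    Finsupp.mapDomain (fun RS : SC × SC => (RS.1, RS.2, PQ.2)) (d (Finsupp.single PQ.1 1))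

/-- Apply a coproduct to the second tensor factor:  `id ⊗ d : T⊗T → T⊗T⊗T`. -/
noncomputable def applySnd (d : FM R →ₗ[R] FM2 R) : FM2 R →ₗ[R] FM3 R :=
  Finsupp.lift _ R (SC × SC) fun PQ =>
    Finsupp.mapDomain (fun RS : SC × SC => (PQ.1, RS.1, RS.2)) (d (Finsupp.single PQ.2 1))

/-- `ε ⊗ id : T⊗T → T`, where `ε` is the projection onto `T_0 ≅ R`
(the coefficient of the empty set composition). -/
noncomputable def epsFst : FM2 R →ₗ[R] FM R :=
  Finsupp.lift _ R (SC × SC) fun PQ =>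
    if PQ.1 = ([] : SC) then Finsupp.single PQ.2 1 else 0

/-- `id ⊗ ε : T⊗T → T`. -/
noncomputable def epsSnd : FM2 R →ₗ[R] FM R :=
  Finsupp.lift _ R (SC × SC) fun PQ =>
    if PQ.2 = ([] : SC) then Finsupp.single PQ.1 1 else 0

/-- The twist map `x ⊗ y ↦ y ⊗ x` on `T_• ⊗ T_•`. -/
noncomputable def twistL : FM2 R →ₗ[R] FM2 R :=
  Finsupp.lift _ R (SC × SC) fun PQ => Finsupp.single (PQ.2, PQ.1) 1

/-- The counit: projection onto the degree-0 component `T_0 ≅ R`. -/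
noncomputable def counitL : FM R →ₗ[R] R :=
  Finsupp.lift _ R SC fun P => if P = ([] : SC) then 1 else 0

/-- The tensor product of two elements of `T_•`, inside `T_• ⊗ T_•`. -/
noncomputable def tensor2 (x y : FM R) : FM2 R :=
  x.sum fun U a => y.sum fun V b => Finsupp.single (U, V) (a * b)

/-- The componentwise product on `T_• ⊗ T_•` induced by the restricted
product `∗̄` : `(a ⊗ b) · (c ⊗ d) = (a ∗̄ c) ⊗ (b ∗̄ d)`. -/
noncomputable def mul2bar : FM2 R →ₗ[R] FM2 R →ₗ[R] FM2 R :=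
  Finsupp.lift _ R (SC × SC) fun PQ => Finsupp.lift _ R (SC × SC) fun RS =>
    Finsupp.single (barMul PQ.1 RS.1, barMul PQ.2 RS.2) 1

/-- The componentwise product on `T_• ⊗ T_•` induced by the symmetrized
product `∗̂` : `(a ⊗ b) · (c ⊗ d) = (a ∗̂ c) ⊗ (b ∗̂ d)`. -/
noncomputable def mul2hat : FM2 R →ₗ[R] FM2 R →ₗ[R] FM2 R :=
  Finsupp.lift _ R (SC × SC) fun PQ => Finsupp.lift _ R (SC × SC) fun RS =>
    tensor2 R (hatB R PQ.1 RS.1) (hatB R PQ.2 RS.2)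

/-- `m ∘ (S ⊗ id)` for the restricted product, used in the antipode axiom. -/
noncomputable def convBarFst (S : FM R →ₗ[R] FM R) : FM2 R →ₗ[R] FM R :=
  Finsupp.lift _ R (SC × SC) fun QR => barL R (S (Finsupp.single QR.1 1)) (Finsupp.single QR.2 1)

/-- `m ∘ (id ⊗ S)` for the restricted product, used in the antipode axiom. -/
noncomputable def convBarSnd (S : FM R →ₗ[R] FM R) : FM2 R →ₗ[R] FM R :=
  Finsupp.lift _ R (SC × SC) fun QR => barL R (Finsupp.single QR.1 1) (S (Finsupp.single QR.2 1))

/-- `m ∘ (S ⊗ id)` for the symmetrized product, used in the antipode axiom. -/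
noncomputable def convHatFst (S : FM R →ₗ[R] FM R) : FM2 R →ₗ[R] FM R :=
  Finsupp.lift _ R (SC × SC) fun QR => hatL R (S (Finsupp.single QR.1 1)) (Finsupp.single QR.2 1)

/-- `m ∘ (id ⊗ S)` for the symmetrized product, used in the antipode axiom. -/
noncomputable def convHatSnd (S : FM R →ₗ[R] FM R) : FM2 R →ₗ[R] FM R :=
  Finsupp.lift _ R (SC × SC) fun QR => hatL R (Finsupp.single QR.1 1) (S (Finsupp.single QR.2 1))

/-! ### Auxiliary lemmas -/

section Aux

lemma rankIn_pos {A : Finset ℕ} {x : ℕ} (hx : x ∈ A) : 1 ≤ rankIn A x :=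
  Finset.card_pos.2 ⟨x, Finset.mem_filter.2 ⟨hx, le_refl x⟩⟩

lemma rankIn_le_card (A : Finset ℕ) (x : ℕ) : rankIn A x ≤ A.card :=
  Finset.card_le_card (Finset.filter_subset _ _)

lemma rankIn_strictMono {A : Finset ℕ} {x y : ℕ} (hy : y ∈ A) (hxy : x < y) :
    rankIn A x < rankIn A y := by
  apply Finset.card_lt_card
  constructor
  · intro z hz
    simp only [Finset.mem_filter] at hz ⊢
    exact ⟨hz.1, hz.2.trans hxy.le⟩
  · intro h
    have := h (Finset.mem_filter.2 ⟨hy, le_refl y⟩)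
    simp only [Finset.mem_filter] at this
    omega

lemma rankIn_mono (A : Finset ℕ) {x y : ℕ} (hxy : x ≤ y) :
    rankIn A x ≤ rankIn A y := by
  apply Finset.card_le_card
  intro z hz
  simp only [Finset.mem_filter] at hz ⊢
  exact ⟨hz.1, hz.2.trans hxy⟩

lemma rankIn_le_iff {A : Finset ℕ} {x y : ℕ} (hx : x ∈ A) (hy : y ∈ A) :
    rankIn A x ≤ rankIn A y ↔ x ≤ y := by
  constructor
  · intro h
    by_contra hc
    push_neg at hc
    have := rankIn_strictMono hx hc
    omega
  · exact rankIn_mono A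

lemma rankIn_injOn {A : Finset ℕ} {x y : ℕ} (hx : x ∈ A) (hy : y ∈ A)
    (h : rankIn A x = rankIn A y) : x = y := by
  have h1 := (rankIn_le_iff hx hy).1 h.le
  have h2 := (rankIn_le_iff hy hx).1 h.ge
  omega

lemma rankIn_image (A : Finset ℕ) : A.image (rankIn A) = Finset.Icc 1 A.card := by
  apply Finset.eq_of_subset_of_card_le
  · intro r hr
    obtain ⟨x, hx, rfl⟩ := Finset.mem_image.1 hr
    exact Finset.mem_Icc.2 ⟨rankIn_pos hx, rankIn_le_card A x⟩
  · rw [Nat.card_Icc]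
    rw [Finset.card_image_of_injOn (fun x hx y hy => rankIn_injOn hx hy)]
    omega

lemma rankIn_mem {A : Finset ℕ} {x : ℕ} (hx : x ∈ A) :
    rankIn A x ∈ Finset.Icc 1 A.card :=
  Finset.mem_Icc.2 ⟨rankIn_pos hx, rankIn_le_card A x⟩

lemma ground_append (L1 L2 : SC) : ground (L1 ++ L2) = ground L1 ∪ ground L2 := by
  induction L1 with
  | nil => simp [ground]
  | cons B L ih =>
    simp only [ground] at ih ⊢
    rw [List.cons_append, List.foldr_cons, List.foldr_cons, ih, Finset.union_assoc]

lemma subset_ground {L : SC} {B : Finset ℕ} (hB : B ∈ L) : B ⊆ ground L := by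
  induction L with
  | nil => simp at hB
  | cons C L ih =>
    simp only [ground, List.foldr] at ih ⊢
    rcases List.mem_cons.1 hB with h | h
    · subst h; exact Finset.subset_union_left
    · exact (ih h).trans Finset.subset_union_right

lemma ground_map_image (f : ℕ → ℕ) (L : SC) :
    ground (L.map (Finset.image f)) = (ground L).image f := by
  induction L with
  | nil => simp [ground]
  | cons B L ih =>
    simp only [ground, List.foldr, List.map_cons] at ih ⊢
    rw [ih, Finset.image_union]

lemma sup_Icc_one (n : ℕ) : (Finset.Icc 1 n).sup id = n := by
  rcases Nat.eq_zero_or_pos n with rfl | hn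
  · simp
  · apply le_antisymm
    · exact Finset.sup_le fun x hx => (Finset.mem_Icc.1 hx).2
    · exact Finset.le_sup (f := id) (Finset.mem_Icc.2 ⟨hn, le_refl n⟩)

lemma maxG_of_isSetComp {n : ℕ} {P : SC} (h : IsSetComp n P) : maxG P = n := by
  rw [maxG, h.2.2, sup_Icc_one]

lemma rankIn_Icc {n x : ℕ} (hx : x ∈ Finset.Icc 1 n) : rankIn (Finset.Icc 1 n) x = x := by
  simp only [Finset.mem_Icc] at hx
  rw [rankIn]
  have h : (Finset.Icc 1 n).filter (· ≤ x) = Finset.Icc 1 x := by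
    ext y; simp only [Finset.mem_filter, Finset.mem_Icc]; omega
  rw [h, Nat.card_Icc]
  omega

lemma ground_filter_nonempty (L : SC) :
    ground (L.filter fun B => decide B.Nonempty) = ground L := by
  induction L with
  | nil => rfl
  | cons B L ih =>
    by_cases hB : B.Nonempty
    · rw [List.filter_cons_of_pos (by simpa using hB)]
      simp only [ground, List.foldr_cons] at ih ⊢
      rw [ih]
    · rw [List.filter_cons_of_neg (by simpa using hB)]
      simp only [ground, List.foldr_cons] at ih ⊢
      rw [ih, Finset.not_nonempty_iff_eq_empty.1 hB, Finset.empty_union]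

lemma ground_map_general (f : Finset ℕ → Finset ℕ) (L : SC)
    (hf : ∀ s t : Finset ℕ, f (s ∪ t) = f s ∪ f t) (h0 : f ∅ = ∅) :
    ground (L.map f) = f (ground L) := by
  induction L with
  | nil => simp [ground, h0]
  | cons B L ih =>
    simp only [ground, List.foldr_cons, List.map_cons] at ih ⊢
    rw [ih, hf]

lemma ground_restrict (A : Finset ℕ) (P : SC) :
    ground (restrictSC A P) = ((ground P ∩ A)).image (rankIn A) := by
  rw [restrictSC, ground_filter_nonempty]
  rw [ground_map_general (fun B => (B ∩ A).image (rankIn A)) P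
    (fun s t => by simp only [Finset.union_inter_distrib_right, Finset.image_union])
    (by simp)]

lemma restrict_isSetComp {n : ℕ} {P : SC} {A : Finset ℕ} (hP : IsSetComp n P)
    (hA : A ⊆ Finset.Icc 1 n) : IsSetComp A.card (restrictSC A P) := by
  obtain ⟨hne, hdisj, hgr⟩ := hP
  refine ⟨?_, ?_, ?_⟩
  · intro B hB
    have := List.of_mem_filter hB
    simpa using this
  · apply List.Pairwise.filter
    rw [List.pairwise_map]
    refine hdisj.imp ?_
    intro B C hBC
    have hd : Disjoint B C := hBC
    rw [Finset.disjoint_left]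
    intro x hx hx'
    obtain ⟨a, ha, rfl⟩ := Finset.mem_image.1 hx
    obtain ⟨b, hb, hab⟩ := Finset.mem_image.1 hx'
    simp only [Finset.mem_inter] at ha hb
    have : b = a := rankIn_injOn hb.2 ha.2 hab
    subst this
    exact Finset.disjoint_left.1 hd ha.1 hb.1
  · rw [ground_restrict, hgr, Finset.inter_eq_right.2 hA, rankIn_image]

lemma maxG_restrict {n : ℕ} {P : SC} {A : Finset ℕ} (hP : IsSetComp n P)
    (hA : A ⊆ Finset.Icc 1 n) : maxG (restrictSC A P) = A.card :=
  maxG_of_isSetComp (restrict_isSetComp hP hA)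

lemma restrict_empty (P : SC) : restrictSC ∅ P = [] := by
  rw [restrictSC, List.filter_eq_nil_iff]
  intro B hB
  obtain ⟨C, _, rfl⟩ := List.mem_map.1 hB
  simp

lemma restrict_eq_nil_iff {n : ℕ} {P : SC} {A : Finset ℕ} (hP : IsSetComp n P)
    (hA : A ⊆ Finset.Icc 1 n) : restrictSC A P = [] ↔ A = ∅ := by
  constructor
  · intro h
    have := (restrict_isSetComp hP hA).2.2
    rw [h] at this
    have h2 : (∅ : Finset ℕ) = Finset.Icc 1 A.card := this
    by_contra hc
    have : 1 ∈ Finset.Icc 1 A.card := Finset.mem_Icc.2 ⟨le_refl 1,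
      Finset.card_pos.2 (Finset.nonempty_iff_ne_empty.2 hc)⟩
    rw [← h2] at this
    simp at this
  · rintro rfl; exact restrict_empty P

lemma restrict_full {n : ℕ} {P : SC} (hP : IsSetComp n P) :
    restrictSC (Finset.Icc 1 n) P = P := by
  obtain ⟨hne, _, hgr⟩ := hP
  rw [restrictSC]
  have hmap : P.map (fun B => (B ∩ Finset.Icc 1 n).image (rankIn (Finset.Icc 1 n))) = P := by
    conv_rhs => rw [← List.map_id P]
    apply List.map_congr_left
    intro B hB
    have hsub : B ⊆ Finset.Icc 1 n := hgr ▸ subset_ground hB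
    rw [Finset.inter_eq_left.2 hsub, id]
    rw [show Finset.image (rankIn (Finset.Icc 1 n)) B = Finset.image id B from
      Finset.image_congr fun x hx => rankIn_Icc (hsub hx), Finset.image_id]
  rw [hmap, List.filter_eq_self]
  intro B hB
  simpa using hne B hB

lemma ground_shift (p : ℕ) (Q : SC) : ground (shiftSC p Q) = (ground Q).image (· + p) :=
  ground_map_image _ _

lemma maxG_nil : maxG ([] : SC) = 0 := rfl

lemma sup_add_const {s : Finset ℕ} (hs : s.Nonempty) (p : ℕ) :
    s.sup (· + p) = s.sup id + p := by
  apply le_antisymm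
  · exact Finset.sup_le fun x hx => by
      have : x ≤ s.sup id := Finset.le_sup (f := id) hx
      omega
  · obtain ⟨b, hb, hb2⟩ := Finset.exists_mem_eq_sup s hs id
    rw [hb2]
    exact Finset.le_sup (f := (· + p)) hb

lemma maxG_barMul (P Q : SC) : maxG (barMul P Q) = maxG P + maxG Q := by
  rw [barMul, maxG, ground_append, ground_shift, Finset.sup_union, Finset.sup_image]
  rcases Finset.eq_empty_or_nonempty (ground Q) with h | h
  · simp [h, maxG]
  · have : (ground Q).sup (id ∘ (· + maxG P)) = (ground Q).sup (· + maxG P) := rfl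
    rw [this, sup_add_const h]
    simp only [maxG]
    omega

lemma shift_zero (Q : SC) : shiftSC 0 Q = Q := by
  rw [shiftSC]
  conv_rhs => rw [← List.map_id Q]
  apply List.map_congr_left
  intro B _
  simp

lemma shift_shift (p q : ℕ) (Q : SC) : shiftSC p (shiftSC q Q) = shiftSC (p + q) Q := by
  simp only [shiftSC, List.map_map]
  apply List.map_congr_left
  intro B _
  simp only [Function.comp_apply, Finset.image_image]
  apply Finset.image_congr
  intro x _
  simp only [Function.comp_apply]
  omega

lemma barMul_assoc (P Q R' : SC) : barMul (barMul P Q) R' = barMul P (barMul Q R') := by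
  have h := maxG_barMul P Q
  simp only [barMul] at h ⊢
  rw [h, List.append_assoc]
  congr 1
  rw [show shiftSC (maxG P) (Q ++ shiftSC (maxG Q) R') =
      shiftSC (maxG P) Q ++ shiftSC (maxG P) (shiftSC (maxG Q) R') from List.map_append]
  rw [shift_shift, Nat.add_comm (maxG P) (maxG Q)]

lemma barMul_nil_left (Q : SC) : barMul [] Q = Q := by
  rw [barMul, maxG_nil, shift_zero, List.nil_append]

lemma barMul_nil_right (P : SC) : barMul P [] = P := by
  rw [barMul, shiftSC, List.map_nil, List.append_nil]

lemma isSetComp_barMul {p q : ℕ} {P Q : SC} (hP : IsSetComp p P) (hQ : IsSetComp q Q) :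
    IsSetComp (p + q) (barMul P Q) := by
  obtain ⟨hPne, hPd, hPg⟩ := hP
  obtain ⟨hQne, hQd, hQg⟩ := hQ
  have hp : maxG P = p := maxG_of_isSetComp ⟨hPne, hPd, hPg⟩
  refine ⟨?_, ?_, ?_⟩
  · intro B hB
    rcases List.mem_append.1 hB with h | h
    · exact hPne B h
    · obtain ⟨C, hC, rfl⟩ := List.mem_map.1 h
      exact (hQne C hC).image _
  · rw [barMul, List.pairwise_append]
    refine ⟨hPd, ?_, ?_⟩
    · rw [shiftSC, List.pairwise_map]
      refine hQd.imp ?_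
      intro B C hBC
      exact Finset.disjoint_image (add_left_injective (maxG P)) |>.2 hBC
    · intro B hB C hC
      have hBs : B ⊆ Finset.Icc 1 p := hPg ▸ subset_ground hB
      rw [shiftSC] at hC
      obtain ⟨D, hD, rfl⟩ := List.mem_map.1 hC
      rw [Finset.disjoint_left]
      intro x hx hx'
      obtain ⟨y, hy, hyx⟩ := Finset.mem_image.1 hx'
      have h1 : x ≤ p := (Finset.mem_Icc.1 (hBs hx)).2
      have h2 : 1 ≤ y := (Finset.mem_Icc.1 ((hQg ▸ subset_ground hD) hy)).1
      omega
  · rw [barMul, ground_append, ground_shift, hPg, hQg, hp]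
    ext x
    simp only [Finset.mem_union, Finset.mem_image, Finset.mem_Icc]
    constructor
    · rintro (h | ⟨y, hy, rfl⟩) <;> omega
    · intro h
      by_cases hx : x ≤ p
      · left; omega
      · right; exact ⟨x - p, by omega, by omega⟩

/-- The subset of `A` corresponding to `A' ⊆ [|A|]` under the relabelling. -/
def liftSet (A A' : Finset ℕ) : Finset ℕ := A.filter (fun x => rankIn A x ∈ A')

lemma liftSet_subset (A A' : Finset ℕ) : liftSet A A' ⊆ A := Finset.filter_subset _ _

lemma image_rankIn_liftSet {A A' : Finset ℕ} (hA' : A' ⊆ Finset.Icc 1 A.card) :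
    (liftSet A A').image (rankIn A) = A' := by
  ext r
  simp only [Finset.mem_image, liftSet, Finset.mem_filter]
  constructor
  · rintro ⟨x, ⟨_, hx2⟩, rfl⟩; exact hx2
  · intro hr
    have : r ∈ A.image (rankIn A) := by rw [rankIn_image]; exact hA' hr
    obtain ⟨x, hx, rfl⟩ := Finset.mem_image.1 this
    exact ⟨x, ⟨hx, hr⟩, rfl⟩

lemma card_liftSet {A A' : Finset ℕ} (hA' : A' ⊆ Finset.Icc 1 A.card) :
    (liftSet A A').card = A'.card := by
  conv_rhs => rw [← image_rankIn_liftSet hA']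
  rw [Finset.card_image_of_injOn (fun x hx y hy =>
      rankIn_injOn (liftSet_subset A A' hx) (liftSet_subset A A' hy))]

lemma liftSet_compl {A A' : Finset ℕ} (hA' : A' ⊆ Finset.Icc 1 A.card) :
    liftSet A (Finset.Icc 1 A.card \ A') = A \ liftSet A A' := by
  ext x
  simp only [liftSet, Finset.mem_filter, Finset.mem_sdiff]
  constructor
  · rintro ⟨hx, _, hr2⟩
    exact ⟨hx, fun h => hr2 h.2⟩
  · rintro ⟨hx, hr⟩
    exact ⟨hx, rankIn_mem hx, fun hc => hr ⟨hx, hc⟩⟩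

lemma rankIn_comp {A A' : Finset ℕ} (hA' : A' ⊆ Finset.Icc 1 A.card) {x : ℕ}
    (hx : x ∈ liftSet A A') : rankIn A' (rankIn A x) = rankIn (liftSet A A') x := by
  have hxA : x ∈ A := liftSet_subset A A' hx
  have key : A'.filter (· ≤ rankIn A x) = ((liftSet A A').filter (· ≤ x)).image (rankIn A) := by
    ext r
    simp only [Finset.mem_filter, Finset.mem_image]
    constructor
    · rintro ⟨hr, hle⟩
      have : r ∈ (liftSet A A').image (rankIn A) := by rw [image_rankIn_liftSet hA']; exact hr
      obtain ⟨y, hy, rfl⟩ := Finset.mem_image.1 this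
      exact ⟨y, ⟨hy, (rankIn_le_iff (liftSet_subset A A' hy) hxA).1 hle⟩, rfl⟩
    · rintro ⟨y, ⟨hy, hyx⟩, rfl⟩
      refine ⟨(Finset.mem_filter.1 hy).2, rankIn_mono A hyx⟩
  rw [rankIn, key, Finset.card_image_of_injOn (fun a ha b hb =>
    rankIn_injOn (liftSet_subset A A' (Finset.mem_filter.1 ha).1)
      (liftSet_subset A A' (Finset.mem_filter.1 hb).1))]
  rfl

lemma filter_map_filter (L : SC) (g g' : Finset ℕ → Finset ℕ)
    (h : ∀ B, ¬ (g B).Nonempty → ¬ (g' (g B)).Nonempty) :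
    (((L.map g).filter (fun B => decide B.Nonempty)).map g').filter
        (fun B => decide B.Nonempty)
      = (L.map (fun B => g' (g B))).filter (fun B => decide B.Nonempty) := by
  induction L with
  | nil => rfl
  | cons B L ih =>
    simp only [List.map_cons]
    by_cases hB : (g B).Nonempty
    · rw [List.filter_cons_of_pos (by simpa using hB), List.map_cons]
      by_cases hB' : (g' (g B)).Nonempty
      · rw [List.filter_cons_of_pos (by simpa using hB'),
          List.filter_cons_of_pos (by simpa using hB'), ih]
      · rw [List.filter_cons_of_neg (by simpa using hB'),
          List.filter_cons_of_neg (by simpa using hB'), ih]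
    · rw [List.filter_cons_of_neg (by simpa using hB),
        List.filter_cons_of_neg (by simpa using h B hB), ih]

lemma restrict_restrict {P : SC} {A A' : Finset ℕ}
    (hA' : A' ⊆ Finset.Icc 1 A.card) :
    restrictSC A' (restrictSC A P) = restrictSC (liftSet A A') P := by
  rw [restrictSC, restrictSC, restrictSC]
  rw [filter_map_filter P _ _ (fun B hB => by
    rw [Finset.not_nonempty_iff_eq_empty] at hB ⊢
    rw [hB]; simp)]
  congr 1
  apply List.map_congr_left
  intro B _
  have h1 : ((B ∩ A).image (rankIn A)) ∩ A' = (B ∩ liftSet A A').image (rankIn A) := by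
    ext r
    simp only [Finset.mem_inter, Finset.mem_image, liftSet, Finset.mem_filter]
    constructor
    · rintro ⟨⟨y, ⟨hy1, hy2⟩, rfl⟩, hr⟩
      exact ⟨y, ⟨hy1, hy2, hr⟩, rfl⟩
    · rintro ⟨y, ⟨hy1, hy2, hy3⟩, rfl⟩
      exact ⟨⟨y, ⟨hy1, hy2⟩, rfl⟩, hy3⟩
  rw [h1, Finset.image_image]
  apply Finset.image_congr
  intro x hx
  simp only [Function.comp_apply]
  exact rankIn_comp hA' (Finset.mem_inter.1 hx).2

/-- The part of `A` lying in `[1,p]`. -/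
def lowPart (p : ℕ) (A : Finset ℕ) : Finset ℕ := A.filter (· ≤ p)

/-- The part of `A` lying above `p`, shifted down by `p`. -/
def highPart (p : ℕ) (A : Finset ℕ) : Finset ℕ :=
  (A.filter (fun x => p < x)).image (fun x => x - p)

lemma rankIn_lowPart {A : Finset ℕ} {p x : ℕ} (hx : x ≤ p) :
    rankIn A x = rankIn (lowPart p A) x := by
  rw [rankIn, rankIn]
  congr 1
  ext y
  simp only [lowPart, Finset.filter_filter, Finset.mem_filter]
  constructor
  · rintro ⟨h1, h2⟩
    exact ⟨h1, h2.trans hx, h2⟩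
  · rintro ⟨h1, _, h2⟩
    exact ⟨h1, h2⟩

lemma lowPart_subset {p q : ℕ} {A : Finset ℕ} (hA : A ⊆ Finset.Icc 1 (p + q)) :
    lowPart p A ⊆ Finset.Icc 1 p := by
  intro x hx
  obtain ⟨h1, h2⟩ := Finset.mem_filter.1 hx
  have := Finset.mem_Icc.1 (hA h1)
  exact Finset.mem_Icc.2 ⟨this.1, h2⟩

lemma highPart_subset {p q : ℕ} {A : Finset ℕ} (hA : A ⊆ Finset.Icc 1 (p + q)) :
    highPart p A ⊆ Finset.Icc 1 q := by
  intro z hz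
  obtain ⟨x, hx, rfl⟩ := Finset.mem_image.1 hz
  obtain ⟨h1, h2⟩ := Finset.mem_filter.1 hx
  have := Finset.mem_Icc.1 (hA h1)
  exact Finset.mem_Icc.2 ⟨by omega, by omega⟩

lemma rankIn_highPart {A : Finset ℕ} {p y : ℕ} (hy : 1 ≤ y) :
    rankIn A (y + p) = (lowPart p A).card + rankIn (highPart p A) y := by
  have h1 : A.filter (· ≤ y + p) = (lowPart p A) ∪ (A.filter fun x => p < x ∧ x ≤ y + p) := by
    ext z
    simp only [lowPart, Finset.mem_filter, Finset.mem_union]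
    by_cases hz : z ∈ A <;> simp [hz] <;> omega
  have h2 : Disjoint (lowPart p A) (A.filter fun x => p < x ∧ x ≤ y + p) := by
    rw [Finset.disjoint_left]
    intro z hz hz'
    obtain ⟨_, h⟩ := Finset.mem_filter.1 hz
    obtain ⟨_, h'⟩ := Finset.mem_filter.1 hz'
    omega
  have h3 : (highPart p A).filter (· ≤ y) = (A.filter fun x => p < x ∧ x ≤ y + p).image
      (fun x => x - p) := by
    ext z
    constructor
    · intro hz
      obtain ⟨hz1, hz2⟩ := Finset.mem_filter.1 hz
      obtain ⟨x, hx, rfl⟩ := Finset.mem_image.1 hz1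
      obtain ⟨hx1, hx2⟩ := Finset.mem_filter.1 hx
      exact Finset.mem_image.2 ⟨x, Finset.mem_filter.2 ⟨hx1, hx2, by omega⟩, rfl⟩
    · intro hz
      obtain ⟨x, hx, rfl⟩ := Finset.mem_image.1 hz
      obtain ⟨hx1, hx2, hx3⟩ := Finset.mem_filter.1 hx
      exact Finset.mem_filter.2 ⟨Finset.mem_image.2 ⟨x, Finset.mem_filter.2 ⟨hx1, hx2⟩, rfl⟩,
        by omega⟩
  have h4 : ((A.filter fun x => p < x ∧ x ≤ y + p).image (fun x => x - p)).card
      = (A.filter fun x => p < x ∧ x ≤ y + p).card := by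
    apply Finset.card_image_of_injOn
    intro a ha b hb hab
    obtain ⟨_, ha1, _⟩ := Finset.mem_filter.1 ha
    obtain ⟨_, hb1, _⟩ := Finset.mem_filter.1 hb
    have hab' : a - p = b - p := hab
    omega
  rw [rankIn, h1, Finset.card_union_of_disjoint h2, rankIn, h3, h4]

lemma restrict_append (A : Finset ℕ) (L1 L2 : SC) :
    restrictSC A (L1 ++ L2) = restrictSC A L1 ++ restrictSC A L2 := by
  rw [restrictSC, restrictSC, restrictSC, List.map_append, List.filter_append]

lemma filter_map_image (c : ℕ) (L : SC) :
    (L.filter fun B => decide B.Nonempty).map (Finset.image (· + c))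
      = (L.map (Finset.image (· + c))).filter (fun B => decide B.Nonempty) := by
  induction L with
  | nil => rfl
  | cons B L ih =>
    by_cases hB : B.Nonempty
    · rw [List.filter_cons_of_pos (by simpa using hB), List.map_cons, List.map_cons,
        List.filter_cons_of_pos (by simpa using hB.image ((· + c) : ℕ → ℕ)), ih]
    · rw [List.filter_cons_of_neg (by simpa using hB), List.map_cons,
        List.filter_cons_of_neg (by simp [Finset.image_nonempty, hB]), ih]

lemma restrict_barMul {p q : ℕ} {P Q : SC} (hP : IsSetComp p P) (hQ : IsSetComp q Q)
    {A : Finset ℕ} (hA : A ⊆ Finset.Icc 1 (p + q)) :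
    restrictSC A (barMul P Q)
      = barMul (restrictSC (lowPart p A) P) (restrictSC (highPart p A) Q) := by
  have hp : maxG P = p := maxG_of_isSetComp hP
  have hm : maxG (restrictSC (lowPart p A) P) = (lowPart p A).card :=
    maxG_restrict hP (lowPart_subset hA)
  rw [barMul, barMul, hm, hp, restrict_append]
  congr 1
  · -- low part
    rw [restrictSC, restrictSC]
    congr 1
    apply List.map_congr_left
    intro B hB
    have hB' : B ⊆ Finset.Icc 1 p := hP.2.2 ▸ subset_ground hB
    have h1 : B ∩ A = B ∩ lowPart p A := by
      ext x
      simp only [Finset.mem_inter, lowPart, Finset.mem_filter]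
      exact ⟨fun ⟨h1, h2⟩ => ⟨h1, h2, (Finset.mem_Icc.1 (hB' h1)).2⟩,
        fun ⟨h1, h2, _⟩ => ⟨h1, h2⟩⟩
    rw [h1]
    apply Finset.image_congr
    intro x hx
    exact rankIn_lowPart (Finset.mem_Icc.1 (hB' (Finset.mem_inter.1 hx).1)).2
  · -- high part
    rw [restrictSC, shiftSC, shiftSC, restrictSC, filter_map_image, List.map_map, List.map_map]
    congr 1
    apply List.map_congr_left
    intro C hC
    have hC' : C ⊆ Finset.Icc 1 q := hQ.2.2 ▸ subset_ground hC
    simp only [Function.comp_apply]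
    have h1 : (C.image (· + p)) ∩ A = (C ∩ highPart p A).image (· + p) := by
      ext z
      constructor
      · intro hz
        obtain ⟨hz1, hz2⟩ := Finset.mem_inter.1 hz
        obtain ⟨y, hy, rfl⟩ := Finset.mem_image.1 hz1
        have h1y : 1 ≤ y := (Finset.mem_Icc.1 (hC' hy)).1
        refine Finset.mem_image.2 ⟨y, Finset.mem_inter.2 ⟨hy, ?_⟩, rfl⟩
        exact Finset.mem_image.2 ⟨y + p, Finset.mem_filter.2 ⟨hz2, by omega⟩, by omega⟩
      · intro hz
        obtain ⟨y, hy, rfl⟩ := Finset.mem_image.1 hz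
        obtain ⟨hy1, hy2⟩ := Finset.mem_inter.1 hy
        obtain ⟨x, hx, hxy⟩ := Finset.mem_image.1 hy2
        obtain ⟨hx1, hx2⟩ := Finset.mem_filter.1 hx
        have hxy' : x - p = y := hxy
        have hxe : x = y + p := by omega
        subst hxe
        exact Finset.mem_inter.2 ⟨Finset.mem_image.2 ⟨y, hy1, rfl⟩, hx1⟩
    rw [h1, Finset.image_image, Finset.image_image]
    apply Finset.image_congr
    intro y hy
    have h1y : 1 ≤ y := (Finset.mem_Icc.1 (hC' (Finset.mem_inter.1 hy).1)).1
    simp only [Function.comp_apply]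
    rw [rankIn_highPart h1y]
    omega

lemma lowPart_sdiff {p q : ℕ} {A : Finset ℕ} :
    lowPart p (Finset.Icc 1 (p + q) \ A) = Finset.Icc 1 p \ lowPart p A := by
  ext x
  simp only [lowPart, Finset.mem_filter, Finset.mem_sdiff, Finset.mem_Icc]
  by_cases hx : x ∈ A <;> simp [hx] <;> omega

lemma highPart_sdiff {p q : ℕ} {A : Finset ℕ} :
    highPart p (Finset.Icc 1 (p + q) \ A) = Finset.Icc 1 q \ highPart p A := by
  ext z
  simp only [highPart, Finset.mem_image, Finset.mem_filter, Finset.mem_sdiff, Finset.mem_Icc]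
  constructor
  · rintro ⟨x, ⟨⟨⟨hx1, hx2⟩, hxA⟩, hpx⟩, rfl⟩
    refine ⟨⟨by omega, by omega⟩, ?_⟩
    rintro ⟨y, ⟨hyA, hpy⟩, hyz⟩
    have : y = x := by omega
    exact hxA (this ▸ hyA)
  · rintro ⟨⟨hz1, hz2⟩, hno⟩
    refine ⟨z + p, ⟨⟨⟨by omega, by omega⟩, ?_⟩, by omega⟩, by omega⟩
    intro hc
    exact hno ⟨z + p, ⟨hc, by omega⟩, by omega⟩

lemma union_parts {p q : ℕ} {A : Finset ℕ} (hA : A ⊆ Finset.Icc 1 (p + q)) :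
    lowPart p A ∪ (highPart p A).image (· + p) = A := by
  ext x
  constructor
  · intro hx
    rcases Finset.mem_union.1 hx with h | h
    · exact (Finset.mem_filter.1 h).1
    · obtain ⟨z, hz, rfl⟩ := Finset.mem_image.1 h
      obtain ⟨y, hy, rfl⟩ := Finset.mem_image.1 hz
      obtain ⟨hy1, hy2⟩ := Finset.mem_filter.1 hy
      have hyy : y - p + p = y := by omega
      rw [hyy]; exact hy1
  · intro hx
    by_cases h : x ≤ p
    · exact Finset.mem_union.2 (Or.inl (Finset.mem_filter.2 ⟨hx, h⟩))
    · exact Finset.mem_union.2 (Or.inr (Finset.mem_image.2 ⟨x - p,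
        Finset.mem_image.2 ⟨x, Finset.mem_filter.2 ⟨hx, by omega⟩, rfl⟩, by omega⟩))

lemma lowPart_union {p q : ℕ} {A' B' : Finset ℕ} (hA' : A' ⊆ Finset.Icc 1 p)
    (hB' : B' ⊆ Finset.Icc 1 q) :
    lowPart p (A' ∪ B'.image (· + p)) = A' := by
  ext x
  simp only [lowPart, Finset.mem_filter, Finset.mem_union, Finset.mem_image]
  constructor
  · rintro ⟨h1 | ⟨y, hy, rfl⟩, h2⟩
    · exact h1
    · have := (Finset.mem_Icc.1 (hB' hy)).1
      omega
  · intro hx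
    exact ⟨Or.inl hx, (Finset.mem_Icc.1 (hA' hx)).2⟩

lemma highPart_union {p q : ℕ} {A' B' : Finset ℕ} (hA' : A' ⊆ Finset.Icc 1 p)
    (hB' : B' ⊆ Finset.Icc 1 q) :
    highPart p (A' ∪ B'.image (· + p)) = B' := by
  ext z
  constructor
  · intro hz
    obtain ⟨x, hx, rfl⟩ := Finset.mem_image.1 hz
    obtain ⟨hx1, hx2⟩ := Finset.mem_filter.1 hx
    rcases Finset.mem_union.1 hx1 with h | h
    · have := (Finset.mem_Icc.1 (hA' h)).2
      exact absurd hx2 (by omega)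
    · obtain ⟨y, hy, rfl⟩ := Finset.mem_image.1 h
      have hyy : y + p - p = y := by omega
      rw [hyy]; exact hy
  · intro hz
    have h1z := (Finset.mem_Icc.1 (hB' hz)).1
    exact Finset.mem_image.2 ⟨z + p, Finset.mem_filter.2
      ⟨Finset.mem_union.2 (Or.inr (Finset.mem_image.2 ⟨z, hz, rfl⟩)), by omega⟩, by omega⟩

lemma union_parts_subset {p q : ℕ} {A' B' : Finset ℕ} (hA' : A' ⊆ Finset.Icc 1 p)
    (hB' : B' ⊆ Finset.Icc 1 q) :
    A' ∪ B'.image (· + p) ⊆ Finset.Icc 1 (p + q) := by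
  intro x hx
  rcases Finset.mem_union.1 hx with h | h
  · have := Finset.mem_Icc.1 (hA' h)
    exact Finset.mem_Icc.2 ⟨this.1, by omega⟩
  · obtain ⟨y, hy, rfl⟩ := Finset.mem_image.1 h
    have := Finset.mem_Icc.1 (hB' hy)
    exact Finset.mem_Icc.2 ⟨by omega, by omega⟩

lemma maxG_restrict_le (A : Finset ℕ) (P : SC) : maxG (restrictSC A P) ≤ A.card := by
  rw [maxG, ground_restrict]
  apply Finset.sup_le
  intro r hr
  obtain ⟨x, _, rfl⟩ := Finset.mem_image.1 hr
  exact rankIn_le_card A x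

lemma card_lt_of_ne {n : ℕ} {A : Finset ℕ} (hA : A ⊆ Finset.Icc 1 n)
    (hne : A ≠ Finset.Icc 1 n) : A.card < n := by
  have h1 : A.card ≤ n := by
    have := Finset.card_le_card hA
    simpa [Nat.card_Icc] using this
  rcases lt_or_eq_of_le h1 with h | h
  · exact h
  · exact absurd (Finset.eq_of_subset_of_card_le hA (by simp [Nat.card_Icc, h])) hne

lemma ne_nil_of_isSetComp {n : ℕ} {P : SC} (hP : IsSetComp n P) (hn : n ≠ 0) : P ≠ [] := by
  intro h
  subst h
  have : (∅ : Finset ℕ) = Finset.Icc 1 n := hP.2.2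
  have h1 : (1 : ℕ) ∈ Finset.Icc 1 n := Finset.mem_Icc.2 ⟨le_refl 1, by omega⟩
  rw [← this] at h1
  simp at h1

lemma eq_nil_of_isSetComp_zero {P : SC} (hP : IsSetComp 0 P) : P = [] := by
  cases P with
  | nil => rfl
  | cons B L =>
    obtain ⟨x, hx⟩ := hP.1 B (List.mem_cons_self)
    have : x ∈ ground (B :: L) := subset_ground (List.mem_cons_self) hx
    rw [hP.2.2] at this
    simp at this

lemma liftSet_image {A B : Finset ℕ} (hB : B ⊆ A) : liftSet A (B.image (rankIn A)) = B := by
  ext x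
  simp only [liftSet, Finset.mem_filter, Finset.mem_image]
  constructor
  · rintro ⟨hxA, b, hb, hrb⟩
    exact (rankIn_injOn (hB hb) hxA hrb) ▸ hb
  · intro hx
    exact ⟨hB hx, x, hx, rfl⟩

lemma powerset_reindex {M : Type*} [AddCommMonoid M] (A : Finset ℕ) (g : Finset ℕ → M) :
    ∑ A' ∈ (Finset.Icc 1 A.card).powerset, g (liftSet A A') = ∑ B ∈ A.powerset, g B := by
  apply Finset.sum_nbij' (i := liftSet A) (j := fun B => B.image (rankIn A))
  · intro A' _
    exact Finset.mem_powerset.2 (liftSet_subset A A')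
  · intro B hB
    apply Finset.mem_powerset.2
    intro r hr
    obtain ⟨x, hx, rfl⟩ := Finset.mem_image.1 hr
    exact rankIn_mem (Finset.mem_powerset.1 hB hx)
  · intro A' hA'
    exact image_rankIn_liftSet (Finset.mem_powerset.1 hA')
  · intro B hB
    exact liftSet_image (Finset.mem_powerset.1 hB)
  · intro A' _
    rfl

lemma sigma_reindex {M : Type*} [AddCommMonoid M] (n : ℕ)
    (f : Finset ℕ → Finset ℕ → Finset ℕ → M) :
    ∑ D ∈ (Finset.Icc 1 n).powerset, ∑ B ∈ D.powerset, f B (D \ B) (Finset.Icc 1 n \ D)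
      = ∑ A ∈ (Finset.Icc 1 n).powerset, ∑ C ∈ (Finset.Icc 1 n \ A).powerset,
          f A C ((Finset.Icc 1 n \ A) \ C) := by
  rw [Finset.sum_sigma', Finset.sum_sigma']
  apply Finset.sum_nbij' (i := fun x => ⟨x.2, x.1 \ x.2⟩) (j := fun y => ⟨y.1 ∪ y.2, y.1⟩)
  · rintro ⟨D, B⟩ hx
    obtain ⟨hD, hB⟩ := Finset.mem_sigma.1 hx
    apply Finset.mem_sigma.2
    refine ⟨Finset.mem_powerset.2 ((Finset.mem_powerset.1 hB).trans (Finset.mem_powerset.1 hD)),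
      Finset.mem_powerset.2 (Finset.sdiff_subset_sdiff (Finset.mem_powerset.1 hD)
        (le_refl _))⟩
  · rintro ⟨A, C⟩ hy
    obtain ⟨hA, hC⟩ := Finset.mem_sigma.1 hy
    apply Finset.mem_sigma.2
    constructor
    · apply Finset.mem_powerset.2
      apply Finset.union_subset (Finset.mem_powerset.1 hA)
      exact (Finset.mem_powerset.1 hC).trans (Finset.sdiff_subset)
    · exact Finset.mem_powerset.2 Finset.subset_union_left
  · rintro ⟨D, B⟩ hx
    obtain ⟨hD, hB⟩ := Finset.mem_sigma.1 hx
    show (⟨B ∪ (D \ B), B⟩ : (_ : Finset ℕ) × Finset ℕ) = ⟨D, B⟩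
    rw [Finset.union_sdiff_of_subset (Finset.mem_powerset.1 hB)]
  · rintro ⟨A, C⟩ hy
    obtain ⟨hA, hC⟩ := Finset.mem_sigma.1 hy
    show (⟨A, (A ∪ C) \ A⟩ : (_ : Finset ℕ) × Finset ℕ) = ⟨A, C⟩
    rw [Finset.union_sdiff_cancel_left
      (Finset.disjoint_left.2 fun a ha ha' =>
        (Finset.mem_sdiff.1 ((Finset.mem_powerset.1 hC) ha')).2 ha)]
  · rintro ⟨D, B⟩ hx
    obtain ⟨hD, hB⟩ := Finset.mem_sigma.1 hx
    have hBD := Finset.mem_powerset.1 hB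
    have hDn := Finset.mem_powerset.1 hD
    have key : Finset.Icc 1 n \ D = (Finset.Icc 1 n \ B) \ (D \ B) := by
      ext z
      simp only [Finset.mem_sdiff]
      have hz := @hBD z
      tauto
    rw [key]

noncomputable section FinsuppLayer

lemma lift_single {α : Type} {M : Type*} [AddCommMonoid M] [Module ℤ M] (f : α → M)
    (a : α) (b : ℤ) :
    Finsupp.lift M ℤ α f (Finsupp.single a b) = b • f a := by
  simp [Finsupp.lift_apply, Finsupp.sum_single_index]

lemma dHatL_single (P : SC) : dHatL ℤ (Finsupp.single P 1) =
    ∑ A ∈ (Finset.Icc 1 (maxG P)).powerset,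
      Finsupp.single (restrictSC A P, restrictSC ((Finset.Icc 1 (maxG P)) \ A) P) 1 := by
  rw [dHatL, lift_single, one_smul]

lemma barL_single (P Q : SC) :
    barL ℤ (Finsupp.single P 1) (Finsupp.single Q 1) = Finsupp.single (barMul P Q) 1 := by
  rw [barL, lift_single, one_smul, lift_single, one_smul]

lemma mul2bar_single (P Q U V : SC) :
    mul2bar ℤ (Finsupp.single (P, Q) 1) (Finsupp.single (U, V) 1)
      = Finsupp.single (barMul P U, barMul Q V) 1 := by
  rw [mul2bar, lift_single, one_smul, lift_single, one_smul]

lemma applyFst_single (d : FM ℤ →ₗ[ℤ] FM2 ℤ) (X Y : SC) :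
    applyFst ℤ d (Finsupp.single (X, Y) 1)
      = Finsupp.mapDomain (fun RS : SC × SC => (RS.1, RS.2, Y)) (d (Finsupp.single X 1)) := by
  rw [applyFst, lift_single, one_smul]

lemma applySnd_single (d : FM ℤ →ₗ[ℤ] FM2 ℤ) (X Y : SC) :
    applySnd ℤ d (Finsupp.single (X, Y) 1)
      = Finsupp.mapDomain (fun RS : SC × SC => (X, RS.1, RS.2)) (d (Finsupp.single Y 1)) := by
  rw [applySnd, lift_single, one_smul]

lemma twistL_single (X Y : SC) :
    twistL ℤ (Finsupp.single (X, Y) 1) = Finsupp.single (Y, X) 1 := by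
  rw [twistL, lift_single, one_smul]

lemma epsFst_single (X Y : SC) :
    epsFst ℤ (Finsupp.single (X, Y) 1)
      = if X = ([] : SC) then Finsupp.single Y 1 else 0 := by
  rw [epsFst, lift_single, one_smul]

lemma epsSnd_single (X Y : SC) :
    epsSnd ℤ (Finsupp.single (X, Y) 1)
      = if Y = ([] : SC) then Finsupp.single X 1 else 0 := by
  rw [epsSnd, lift_single, one_smul]

lemma counitL_single (X : SC) :
    counitL ℤ (Finsupp.single X 1) = if X = ([] : SC) then 1 else 0 := by
  rw [counitL, lift_single]
  simp

lemma convBarFst_single (S : FM ℤ →ₗ[ℤ] FM ℤ) (X Y : SC) :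
    convBarFst ℤ S (Finsupp.single (X, Y) 1)
      = barL ℤ (S (Finsupp.single X 1)) (Finsupp.single Y 1) := by
  rw [convBarFst, lift_single, one_smul]

lemma convBarSnd_single (S : FM ℤ →ₗ[ℤ] FM ℤ) (X Y : SC) :
    convBarSnd ℤ S (Finsupp.single (X, Y) 1)
      = barL ℤ (Finsupp.single X 1) (S (Finsupp.single Y 1)) := by
  rw [convBarSnd, lift_single, one_smul]

lemma barL_nil_left (x : FM ℤ) : barL ℤ (Finsupp.single ([] : SC) 1) x = x := by
  induction x using Finsupp.induction_linear with
  | zero => simp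
  | add f g hf hg => rw [map_add, hf, hg]
  | single a b =>
    rw [barL, lift_single, one_smul, lift_single, barMul_nil_left, Finsupp.smul_single,
      smul_eq_mul, mul_one]

lemma barL_nil_right (x : FM ℤ) : barL ℤ x (Finsupp.single ([] : SC) 1) = x := by
  induction x using Finsupp.induction_linear with
  | zero => simp
  | add f g hf hg =>
    rw [map_add, LinearMap.add_apply, hf, hg]
  | single a b =>
    rw [barL, lift_single, LinearMap.smul_apply, lift_single, one_smul, barMul_nil_right,
      Finsupp.smul_single, smul_eq_mul, mul_one]

lemma barL_assoc_all (x y z : FM ℤ) :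
    barL ℤ (barL ℤ x y) z = barL ℤ x (barL ℤ y z) := by
  induction x using Finsupp.induction_linear with
  | zero => simp
  | add f g hf hg => simp only [map_add, LinearMap.add_apply, hf, hg]
  | single a b =>
    induction y using Finsupp.induction_linear with
    | zero => simp
    | add f g hf hg => simp only [map_add, LinearMap.add_apply, hf, hg]
    | single c d =>
      induction z using Finsupp.induction_linear with
      | zero => simp
      | add f g hf hg => simp only [map_add, LinearMap.add_apply, hf, hg]
      | single e k =>
        have h1 : (Finsupp.single a b : FM ℤ) = b • Finsupp.single a 1 := by
          rw [Finsupp.smul_single, smul_eq_mul, mul_one]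
        have h2 : (Finsupp.single c d : FM ℤ) = d • Finsupp.single c 1 := by
          rw [Finsupp.smul_single, smul_eq_mul, mul_one]
        have h3 : (Finsupp.single e k : FM ℤ) = k • Finsupp.single e 1 := by
          rw [Finsupp.smul_single, smul_eq_mul, mul_one]
        rw [h1, h2, h3]
        simp only [map_smul, LinearMap.smul_apply]
        rw [barL_single, barL_single, barL_single, barL_single, barMul_assoc]

end FinsuppLayer

noncomputable section MainParts

lemma dHatL_restrict {n : ℕ} {P : SC} (hP : IsSetComp n P) {A : Finset ℕ}
    (hA : A ⊆ Finset.Icc 1 n) :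
    dHatL ℤ (Finsupp.single (restrictSC A P) 1)
      = ∑ B ∈ A.powerset, Finsupp.single (restrictSC B P, restrictSC (A \ B) P) 1 := by
  rw [dHatL_single, maxG_restrict hP hA,
    ← powerset_reindex A (fun B => Finsupp.single (restrictSC B P, restrictSC (A \ B) P) 1)]
  apply Finset.sum_congr rfl
  intro A' hA'
  have hA'' : A' ⊆ Finset.Icc 1 A.card := Finset.mem_powerset.1 hA'
  rw [restrict_restrict hA'', restrict_restrict Finset.sdiff_subset, liftSet_compl hA'']

lemma coassoc_aux {n : ℕ} {P : SC} (hP : IsSetComp n P) :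
    applyFst ℤ (dHatL ℤ) (dHatL ℤ (Finsupp.single P 1))
      = applySnd ℤ (dHatL ℤ) (dHatL ℤ (Finsupp.single P 1)) := by
  have hn : maxG P = n := maxG_of_isSetComp hP
  rw [dHatL_single, hn, map_sum, map_sum]
  have hL : ∀ A ∈ (Finset.Icc 1 n).powerset,
      applyFst ℤ (dHatL ℤ)
          (Finsupp.single (restrictSC A P, restrictSC (Finset.Icc 1 n \ A) P) 1)
        = ∑ B ∈ A.powerset, Finsupp.single
            (restrictSC B P, restrictSC (A \ B) P, restrictSC (Finset.Icc 1 n \ A) P) 1 := by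
    intro A hA
    rw [applyFst_single, dHatL_restrict hP (Finset.mem_powerset.1 hA),
      Finsupp.mapDomain_finset_sum]
    apply Finset.sum_congr rfl
    intro B _
    rw [Finsupp.mapDomain_single]
  have hR : ∀ A ∈ (Finset.Icc 1 n).powerset,
      applySnd ℤ (dHatL ℤ)
          (Finsupp.single (restrictSC A P, restrictSC (Finset.Icc 1 n \ A) P) 1)
        = ∑ C ∈ (Finset.Icc 1 n \ A).powerset, Finsupp.single
            (restrictSC A P, restrictSC C P, restrictSC ((Finset.Icc 1 n \ A) \ C) P) 1 := by
    intro A hA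
    rw [applySnd_single, dHatL_restrict hP Finset.sdiff_subset,
      Finsupp.mapDomain_finset_sum]
    apply Finset.sum_congr rfl
    intro C _
    rw [Finsupp.mapDomain_single]
  rw [Finset.sum_congr rfl hL, Finset.sum_congr rfl hR]
  exact sigma_reindex n
    (fun B X Y => Finsupp.single (restrictSC B P, restrictSC X P, restrictSC Y P) 1)

lemma cocomm_aux {n : ℕ} {P : SC} (hP : IsSetComp n P) :
    twistL ℤ (dHatL ℤ (Finsupp.single P 1)) = dHatL ℤ (Finsupp.single P 1) := by
  have hn : maxG P = n := maxG_of_isSetComp hP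
  rw [dHatL_single, hn, map_sum]
  have h1 : ∀ A ∈ (Finset.Icc 1 n).powerset,
      twistL ℤ (Finsupp.single (restrictSC A P, restrictSC (Finset.Icc 1 n \ A) P) 1)
        = Finsupp.single (restrictSC (Finset.Icc 1 n \ A) P, restrictSC A P) 1 := by
    intro A _
    rw [twistL_single]
  rw [Finset.sum_congr rfl h1]
  apply Finset.sum_nbij' (i := fun A => Finset.Icc 1 n \ A) (j := fun A => Finset.Icc 1 n \ A)
  · intro A _
    exact Finset.mem_powerset.2 Finset.sdiff_subset
  · intro A _
    exact Finset.mem_powerset.2 Finset.sdiff_subset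
  · intro A hA
    exact Finset.sdiff_sdiff_eq_self (Finset.mem_powerset.1 hA)
  · intro A hA
    exact Finset.sdiff_sdiff_eq_self (Finset.mem_powerset.1 hA)
  · intro A hA
    rw [Finset.sdiff_sdiff_eq_self (Finset.mem_powerset.1 hA)]

lemma counit_fst_aux {n : ℕ} {P : SC} (hP : IsSetComp n P) :
    epsFst ℤ (dHatL ℤ (Finsupp.single P 1)) = Finsupp.single P 1 := by
  have hn : maxG P = n := maxG_of_isSetComp hP
  rw [dHatL_single, hn, map_sum]
  have h0 : ∀ A ∈ (Finset.Icc 1 n).powerset, A ≠ ∅ →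
      epsFst ℤ (Finsupp.single (restrictSC A P, restrictSC (Finset.Icc 1 n \ A) P) 1) = 0 := by
    intro A hA hne
    rw [epsFst_single,
      if_neg (fun hc => hne ((restrict_eq_nil_iff hP (Finset.mem_powerset.1 hA)).1 hc))]
  rw [Finset.sum_eq_single_of_mem ∅ (Finset.empty_mem_powerset _) h0, epsFst_single,
    restrict_empty, if_pos rfl, Finset.sdiff_empty, restrict_full hP]

lemma counit_snd_aux {n : ℕ} {P : SC} (hP : IsSetComp n P) :
    epsSnd ℤ (dHatL ℤ (Finsupp.single P 1)) = Finsupp.single P 1 := by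
  have hn : maxG P = n := maxG_of_isSetComp hP
  rw [dHatL_single, hn, map_sum]
  have h0 : ∀ A ∈ (Finset.Icc 1 n).powerset, A ≠ Finset.Icc 1 n →
      epsSnd ℤ (Finsupp.single (restrictSC A P, restrictSC (Finset.Icc 1 n \ A) P) 1) = 0 := by
    intro A hA hne
    rw [epsSnd_single, if_neg]
    intro hc
    have h1 : Finset.Icc 1 n \ A = ∅ :=
      (restrict_eq_nil_iff hP Finset.sdiff_subset).1 hc
    have h2 : Finset.Icc 1 n ⊆ A := Finset.sdiff_eq_empty_iff_subset.1 h1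
    exact hne (Finset.Subset.antisymm (Finset.mem_powerset.1 hA) h2)
  rw [Finset.sum_eq_single_of_mem (Finset.Icc 1 n) (Finset.mem_powerset_self _) h0,
    epsSnd_single, Finset.sdiff_self, restrict_empty, if_pos rfl, restrict_full hP]

lemma bialg_aux {p q : ℕ} {P Q : SC} (hP : IsSetComp p P) (hQ : IsSetComp q Q) :
    dHatL ℤ (Finsupp.single (barMul P Q) 1)
      = mul2bar ℤ (dHatL ℤ (Finsupp.single P 1)) (dHatL ℤ (Finsupp.single Q 1)) := by
  have hPQ := isSetComp_barMul hP hQ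
  rw [dHatL_single, maxG_of_isSetComp hPQ, dHatL_single, maxG_of_isSetComp hP,
    dHatL_single, maxG_of_isSetComp hQ, map_sum]
  have hR : ∀ B' ∈ (Finset.Icc 1 q).powerset,
      (mul2bar ℤ (∑ A' ∈ (Finset.Icc 1 p).powerset,
            Finsupp.single (restrictSC A' P, restrictSC (Finset.Icc 1 p \ A') P) 1))
          (Finsupp.single (restrictSC B' Q, restrictSC (Finset.Icc 1 q \ B') Q) 1)
        = ∑ A' ∈ (Finset.Icc 1 p).powerset,
            Finsupp.single (barMul (restrictSC A' P) (restrictSC B' Q),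
              barMul (restrictSC (Finset.Icc 1 p \ A') P)
                (restrictSC (Finset.Icc 1 q \ B') Q)) 1 := by
    intro B' _
    rw [map_sum, LinearMap.sum_apply]
    apply Finset.sum_congr rfl
    intro A' _
    rw [mul2bar_single]
  rw [Finset.sum_congr rfl hR, ← Finset.sum_product']
  have hL : ∀ A ∈ (Finset.Icc 1 (p + q)).powerset,
      (Finsupp.single (restrictSC A (barMul P Q),
          restrictSC (Finset.Icc 1 (p + q) \ A) (barMul P Q)) 1 : FM2 ℤ)
        = Finsupp.single (barMul (restrictSC (lowPart p A) P) (restrictSC (highPart p A) Q),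
            barMul (restrictSC (Finset.Icc 1 p \ lowPart p A) P)
              (restrictSC (Finset.Icc 1 q \ highPart p A) Q)) 1 := by
    intro A hA
    rw [restrict_barMul hP hQ (Finset.mem_powerset.1 hA),
      restrict_barMul hP hQ Finset.sdiff_subset, lowPart_sdiff, highPart_sdiff]
  rw [Finset.sum_congr rfl hL]
  apply Finset.sum_nbij' (i := fun A => (highPart p A, lowPart p A))
    (j := fun y => y.2 ∪ y.1.image (· + p))
  · intro A hA
    exact Finset.mem_product.2
      ⟨Finset.mem_powerset.2 (highPart_subset (Finset.mem_powerset.1 hA)),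
        Finset.mem_powerset.2 (lowPart_subset (Finset.mem_powerset.1 hA))⟩
  · rintro ⟨B', A'⟩ hy
    obtain ⟨h1, h2⟩ := Finset.mem_product.1 hy
    exact Finset.mem_powerset.2
      (union_parts_subset (Finset.mem_powerset.1 h2) (Finset.mem_powerset.1 h1))
  · intro A hA
    exact union_parts (Finset.mem_powerset.1 hA)
  · rintro ⟨B', A'⟩ hy
    obtain ⟨h1, h2⟩ := Finset.mem_product.1 hy
    have hl := lowPart_union (Finset.mem_powerset.1 h2) (Finset.mem_powerset.1 h1)
    have hh := highPart_union (Finset.mem_powerset.1 h2) (Finset.mem_powerset.1 h1)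
    exact Prod.ext hh hl
  · intro A _
    rfl

end MainParts

noncomputable section Antipode

/-- The antipode on basis elements, by degree recursion. -/
def antip (P : SC) : FM ℤ :=
  if h : maxG P = 0 then Finsupp.single P 1
  else - ∑ A ∈ ((Finset.Icc 1 (maxG P)).powerset.erase (Finset.Icc 1 (maxG P))).attach,
      barL ℤ (antip (restrictSC A.1 P))
        (Finsupp.single (restrictSC (Finset.Icc 1 (maxG P) \ A.1) P) 1)
termination_by maxG P
decreasing_by
  have hA := A.2
  rw [Finset.mem_erase] at hA
  obtain ⟨hne, hsub⟩ := hA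
  exact lt_of_le_of_lt (maxG_restrict_le _ _)
    (card_lt_of_ne (Finset.mem_powerset.1 hsub) hne)

lemma antip_nil : antip [] = Finsupp.single ([] : SC) 1 := by
  rw [antip]
  exact dif_pos rfl

lemma antip_spec {n : ℕ} {P : SC} (hP : IsSetComp n P) (hn : n ≠ 0) :
    antip P = - ∑ A ∈ ((Finset.Icc 1 n).powerset.erase (Finset.Icc 1 n)),
      barL ℤ (antip (restrictSC A P))
        (Finsupp.single (restrictSC (Finset.Icc 1 n \ A) P) 1) := by
  have hm : maxG P = n := maxG_of_isSetComp hP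
  rw [antip, dif_neg (by rw [hm]; exact hn), hm]
  congr 1
  exact Finset.sum_attach _ (fun A => barL ℤ (antip (restrictSC A P))
    (Finsupp.single (restrictSC (Finset.Icc 1 n \ A) P) 1))

/-- The antipode as a linear map. -/
def SAnt : FM ℤ →ₗ[ℤ] FM ℤ := Finsupp.lift _ ℤ SC antip

lemma SAnt_single (P : SC) : SAnt (Finsupp.single P 1) = antip P := by
  rw [SAnt, lift_single, one_smul]

lemma Icc_one_zero : Finset.Icc 1 0 = (∅ : Finset ℕ) := by
  apply Finset.Icc_eq_empty
  omega

lemma dHatL_nil : dHatL ℤ (Finsupp.single ([] : SC) 1)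
    = Finsupp.single (([] : SC), ([] : SC)) 1 := by
  rw [dHatL_single, maxG_nil, Icc_one_zero, Finset.powerset_empty, Finset.sum_singleton,
    restrict_empty, Finset.sdiff_empty, restrict_empty]

lemma base_fst : convBarFst ℤ SAnt (dHatL ℤ (Finsupp.single ([] : SC) 1))
    = Finsupp.single ([] : SC) 1 := by
  rw [dHatL_nil, convBarFst_single, SAnt_single, antip_nil, barL_single, barMul_nil_left]

lemma base_snd : convBarSnd ℤ SAnt (dHatL ℤ (Finsupp.single ([] : SC) 1))
    = Finsupp.single ([] : SC) 1 := by
  rw [dHatL_nil, convBarSnd_single, SAnt_single, antip_nil, barL_single, barMul_nil_left]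

lemma antipode_fst {n : ℕ} {P : SC} (hP : IsSetComp n P) :
    convBarFst ℤ SAnt (dHatL ℤ (Finsupp.single P 1))
      = counitL ℤ (Finsupp.single P 1) • Finsupp.single ([] : SC) 1 := by
  by_cases hzero : n = 0
  · subst hzero
    have hPn : P = [] := eq_nil_of_isSetComp_zero hP
    subst hPn
    rw [base_fst, counitL_single, if_pos rfl, one_smul]
  · have hPne : P ≠ [] := ne_nil_of_isSetComp hP hzero
    have hn : maxG P = n := maxG_of_isSetComp hP
    rw [counitL_single, if_neg hPne, zero_smul, dHatL_single, hn, map_sum]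
    have hterm : ∀ A ∈ (Finset.Icc 1 n).powerset,
        convBarFst ℤ SAnt
            (Finsupp.single (restrictSC A P, restrictSC (Finset.Icc 1 n \ A) P) 1)
          = barL ℤ (antip (restrictSC A P))
              (Finsupp.single (restrictSC (Finset.Icc 1 n \ A) P) 1) := by
      intro A _
      rw [convBarFst_single, SAnt_single]
    rw [Finset.sum_congr rfl hterm,
      ← Finset.sum_erase_add _ _ (Finset.mem_powerset_self (Finset.Icc 1 n)),
      restrict_full hP, Finset.sdiff_self, restrict_empty, barL_nil_right (antip P),
      antip_spec hP hzero]
    exact add_neg_cancel _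

lemma antipode_snd : ∀ n : ℕ, ∀ P : SC, IsSetComp n P →
    convBarSnd ℤ SAnt (dHatL ℤ (Finsupp.single P 1))
      = counitL ℤ (Finsupp.single P 1) • Finsupp.single ([] : SC) 1 := by
  intro n
  induction n using Nat.strong_induction_on with
  | _ n IH =>
  intro P hP
  by_cases hzero : n = 0
  · subst hzero
    have hPn : P = [] := eq_nil_of_isSetComp_zero hP
    subst hPn
    rw [base_snd, counitL_single, if_pos rfl, one_smul]
  · have hPne : P ≠ [] := ne_nil_of_isSetComp hP hzero
    have hn : maxG P = n := maxG_of_isSetComp hP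
    set T := ∑ D ∈ (Finset.Icc 1 n).powerset,
      barL ℤ (convBarFst ℤ SAnt (dHatL ℤ (Finsupp.single (restrictSC D P) 1)))
        (antip (restrictSC (Finset.Icc 1 n \ D) P)) with hT
    -- First evaluation: T = antip P
    have hT1 : T = antip P := by
      rw [hT]
      have h0 : ∀ D ∈ (Finset.Icc 1 n).powerset, D ≠ ∅ →
          barL ℤ (convBarFst ℤ SAnt (dHatL ℤ (Finsupp.single (restrictSC D P) 1)))
            (antip (restrictSC (Finset.Icc 1 n \ D) P)) = 0 := by
        intro D hD hDne
        rw [antipode_fst (restrict_isSetComp hP (Finset.mem_powerset.1 hD)), counitL_single,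
          if_neg (fun hc => hDne ((restrict_eq_nil_iff hP (Finset.mem_powerset.1 hD)).1 hc)),
          zero_smul, map_zero, LinearMap.zero_apply]
      rw [Finset.sum_eq_single_of_mem ∅ (Finset.empty_mem_powerset _) h0, restrict_empty,
        base_fst, barL_nil_left, Finset.sdiff_empty, restrict_full hP]
    -- Second evaluation: T = R + antip P
    have hexp : ∀ D ∈ (Finset.Icc 1 n).powerset,
        barL ℤ (convBarFst ℤ SAnt (dHatL ℤ (Finsupp.single (restrictSC D P) 1)))
            (antip (restrictSC (Finset.Icc 1 n \ D) P))
          = ∑ B ∈ D.powerset,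
              barL ℤ (barL ℤ (antip (restrictSC B P))
                  (Finsupp.single (restrictSC (D \ B) P) 1))
                (antip (restrictSC (Finset.Icc 1 n \ D) P)) := by
      intro D hD
      rw [dHatL_restrict hP (Finset.mem_powerset.1 hD), map_sum]
      have : ∀ B ∈ D.powerset,
          convBarFst ℤ SAnt
              (Finsupp.single (restrictSC B P, restrictSC (D \ B) P) 1)
            = barL ℤ (antip (restrictSC B P))
                (Finsupp.single (restrictSC (D \ B) P) 1) := by
        intro B _
        rw [convBarFst_single, SAnt_single]
      rw [Finset.sum_congr rfl this, map_sum, LinearMap.sum_apply]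
    have hT2 : T = convBarSnd ℤ SAnt (dHatL ℤ (Finsupp.single P 1)) + antip P := by
      rw [hT, Finset.sum_congr rfl hexp]
      have hassoc : ∀ D ∈ (Finset.Icc 1 n).powerset, ∀ B ∈ D.powerset,
          barL ℤ (barL ℤ (antip (restrictSC B P))
              (Finsupp.single (restrictSC (D \ B) P) 1))
            (antip (restrictSC (Finset.Icc 1 n \ D) P))
          = barL ℤ (antip (restrictSC B P))
              (barL ℤ (Finsupp.single (restrictSC (D \ B) P) 1)
                (antip (restrictSC (Finset.Icc 1 n \ D) P))) := by
        intro D _ B _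
        exact barL_assoc_all _ _ _
      rw [Finset.sum_congr rfl (fun D hD => Finset.sum_congr rfl (hassoc D hD))]
      rw [sigma_reindex n (fun A C E => barL ℤ (antip (restrictSC A P))
        (barL ℤ (Finsupp.single (restrictSC C P) 1) (antip (restrictSC E P))))]
      have hinner : ∀ A ∈ (Finset.Icc 1 n).powerset,
          (∑ C ∈ (Finset.Icc 1 n \ A).powerset,
              barL ℤ (antip (restrictSC A P))
                (barL ℤ (Finsupp.single (restrictSC C P) 1)
                  (antip (restrictSC ((Finset.Icc 1 n \ A) \ C) P))))
            = barL ℤ (antip (restrictSC A P))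
                (convBarSnd ℤ SAnt
                  (dHatL ℤ (Finsupp.single (restrictSC (Finset.Icc 1 n \ A) P) 1))) := by
        intro A _
        rw [dHatL_restrict hP Finset.sdiff_subset, map_sum, ← map_sum]
        congr 1
        apply Finset.sum_congr rfl
        intro C _
        rw [convBarSnd_single, SAnt_single]
      rw [Finset.sum_congr rfl hinner]
      have hsub : ({∅, Finset.Icc 1 n} : Finset (Finset ℕ)) ⊆ (Finset.Icc 1 n).powerset := by
        intro x hx
        rcases Finset.mem_insert.1 hx with rfl | hx
        · exact Finset.empty_mem_powerset _
        · rw [Finset.mem_singleton.1 hx]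
          exact Finset.mem_powerset_self _
      have hvanish : ∀ A ∈ (Finset.Icc 1 n).powerset,
          A ∉ ({∅, Finset.Icc 1 n} : Finset (Finset ℕ)) →
          barL ℤ (antip (restrictSC A P))
            (convBarSnd ℤ SAnt
              (dHatL ℤ (Finsupp.single (restrictSC (Finset.Icc 1 n \ A) P) 1))) = 0 := by
        intro A hA hAn
        have hAsub := Finset.mem_powerset.1 hA
        have hAne : A ≠ ∅ := fun h => hAn (by rw [h]; exact Finset.mem_insert_self _ _)
        have hAnic : A ≠ Finset.Icc 1 n := fun h => hAn
          (by rw [h]; exact Finset.mem_insert_of_mem (Finset.mem_singleton_self _))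
        have hcard : (Finset.Icc 1 n \ A).card < n := by
          rw [Finset.card_sdiff_of_subset hAsub, Nat.card_Icc]
          have h1 : 1 ≤ A.card := Finset.card_pos.2 (Finset.nonempty_iff_ne_empty.2 hAne)
          have h2 : A.card ≤ n := by
            have := Finset.card_le_card hAsub
            simpa [Nat.card_Icc] using this
          omega
        rw [IH _ hcard _ (restrict_isSetComp hP Finset.sdiff_subset), counitL_single, if_neg,
          zero_smul, map_zero]
        intro hc
        have h1 : Finset.Icc 1 n \ A = ∅ :=
          (restrict_eq_nil_iff hP Finset.sdiff_subset).1 hc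
        exact hAnic (Finset.Subset.antisymm hAsub (Finset.sdiff_eq_empty_iff_subset.1 h1))
      rw [← Finset.sum_subset hsub hvanish,
        Finset.sum_pair (show (∅ : Finset ℕ) ≠ Finset.Icc 1 n from fun h => by
          have : (1 : ℕ) ∈ Finset.Icc 1 n := Finset.mem_Icc.2 ⟨le_refl 1, by omega⟩
          rw [← h] at this
          simp at this)]
      congr 1
      · rw [restrict_empty, antip_nil, barL_nil_left, Finset.sdiff_empty, restrict_full hP]
      · rw [restrict_full hP, Finset.sdiff_self, restrict_empty, dHatL_nil,
          convBarSnd_single, SAnt_single, antip_nil, barL_single, barMul_nil_left,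
          barL_nil_right]
    have hzero' : convBarSnd ℤ SAnt (dHatL ℤ (Finsupp.single P 1)) = 0 := by
      have h := hT1.symm.trans hT2
      exact (right_eq_add.1 h)
    rw [hzero', counitL_single, if_neg hPne, zero_smul]

end Antipode

lemma barMul_eq_nil_iff {P Q : SC} : barMul P Q = [] ↔ P = [] ∧ Q = [] := by
  rw [barMul, shiftSC, List.append_eq_nil_iff, List.map_eq_nil_iff]

end Aux

/-- **Theorem.** `(T_•, ∗̄, δ̂)` is a graded connected cocommutative Hopf algebra
over ℤ: `∗̄` is a graded associative unital product, `δ̂` is a coassociative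
cocommutative counital coproduct, `δ̂` and the counit are algebra homomorphisms,
and an antipode exists. -/
theorem bar_hat_hopf_algebra :
    -- graded associative unital algebra
    (∀ (p q : ℕ) (P Q : SC), IsSetComp p P → IsSetComp q Q →
        IsSetComp (p + q) (barMul P Q)) ∧
    (∀ x y z : FM ℤ, x ∈ Tspan ℤ → y ∈ Tspan ℤ → z ∈ Tspan ℤ →
        barL ℤ (barL ℤ x y) z = barL ℤ x (barL ℤ y z)) ∧
    (∀ x : FM ℤ, x ∈ Tspan ℤ →
        barL ℤ (Finsupp.single ([] : SC) 1) x = x ∧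
        barL ℤ x (Finsupp.single ([] : SC) 1) = x) ∧
    -- coassociative cocommutative counital coproduct
    (∀ (n : ℕ) (P : SC), IsSetComp n P →
        applyFst ℤ (dHatL ℤ) (dHatL ℤ (Finsupp.single P 1)) =
          applySnd ℤ (dHatL ℤ) (dHatL ℤ (Finsupp.single P 1))) ∧
    (∀ (n : ℕ) (P : SC), IsSetComp n P →
        twistL ℤ (dHatL ℤ (Finsupp.single P 1)) = dHatL ℤ (Finsupp.single P 1)) ∧
    (∀ (n : ℕ) (P : SC), IsSetComp n P →
        epsFst ℤ (dHatL ℤ (Finsupp.single P 1)) = Finsupp.single P 1 ∧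
        epsSnd ℤ (dHatL ℤ (Finsupp.single P 1)) = Finsupp.single P 1) ∧
    -- δ̂ is an algebra homomorphism: δ̂(x ∗̄ y) = δ̂(x) · δ̂(y)
    (∀ (p q : ℕ) (P Q : SC), IsSetComp p P → IsSetComp q Q →
        dHatL ℤ (Finsupp.single (barMul P Q) 1) =
          mul2bar ℤ (dHatL ℤ (Finsupp.single P 1)) (dHatL ℤ (Finsupp.single Q 1))) ∧
    -- the counit is an algebra homomorphism
    (∀ (p q : ℕ) (P Q : SC), IsSetComp p P → IsSetComp q Q →
        counitL ℤ (Finsupp.single (barMul P Q) 1) =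
          counitL ℤ (Finsupp.single P 1) * counitL ℤ (Finsupp.single Q 1)) ∧
    counitL ℤ (Finsupp.single ([] : SC) 1) = 1 ∧
    -- connectedness: the degree-0 component is spanned by the empty composition
    (∀ P : SC, IsSetComp 0 P → P = []) ∧
    -- an antipode exists
    (∃ S : FM ℤ →ₗ[ℤ] FM ℤ, ∀ (n : ℕ) (P : SC), IsSetComp n P →
        convBarFst ℤ S (dHatL ℤ (Finsupp.single P 1)) =
          counitL ℤ (Finsupp.single P 1) • Finsupp.single ([] : SC) 1 ∧
        convBarSnd ℤ S (dHatL ℤ (Finsupp.single P 1)) =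
          counitL ℤ (Finsupp.single P 1) • Finsupp.single ([] : SC) 1) := by
  refine ⟨fun p q P Q hP hQ => isSetComp_barMul hP hQ,
    fun x y z _ _ _ => barL_assoc_all x y z,
    fun x _ => ⟨barL_nil_left x, barL_nil_right x⟩,
    fun n P hP => coassoc_aux hP,
    fun n P hP => cocomm_aux hP,
    fun n P hP => ⟨counit_fst_aux hP, counit_snd_aux hP⟩,
    fun p q P Q hP hQ => bialg_aux hP hQ,
    ?_, ?_,
    fun P hP => eq_nil_of_isSetComp_zero hP,
    ⟨SAnt, fun n P hP => ⟨antipode_fst hP, antipode_snd n P hP⟩⟩⟩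
  · intro p q P Q _ _
    rw [counitL_single, counitL_single, counitL_single]
    by_cases hp : P = [] <;> by_cases hq : Q = [] <;>
      simp [hp, hq, barMul_eq_nil_iff]
  · rw [counitL_single, if_pos rfl]
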